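/- arXiv:0809.1047 — 2 statements merged into one kernel-verified Lean document; each statement's English description precedes it below -/
import Mathlib

section
/- Let n ≥ 1 be an integer, t > 0 a real number, and α₀, α₁, …, α_n real numbers with 0 ≤ α_k < 1 for every k. Set t₀ = t, t_{n+1} = 0 and β₀ = α₀ + α₁ + ⋯ + α_n. Then the iterated integral over the simplex 0 < t_n < t_{n-1} < ⋯ < t₁ < t of the product ∏_{k=0}^{n} (t_k − t_{k+1})^{−α_k} dt₁ ⋯ dt_n equals t^{n − β₀} · (∏_{k=0}^{n} Γ(1 − α_k)) / Γ(n + 1 − β₀). -/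
open MeasureTheory


lemma rbeta_half {a b : ℝ} (ha : 0 < a) :
    IntervalIntegrable (fun x : ℝ => x ^ (a-1) * (1-x) ^ (b-1)) volume 0 (1/2) := by
  have h1 : IntervalIntegrable (fun x : ℝ => x ^ (a-1)) volume 0 (1/2) :=
    intervalIntegral.intervalIntegrable_rpow' (by linarith)
  refine h1.mul_continuousOn (ContinuousOn.rpow_const (by fun_prop) ?_)
  intro x hx
  rw [Set.uIcc_of_le (by norm_num)] at hx
  have h2 := hx.2
  left; intro h; rw [sub_eq_zero] at h; linarith

lemma rbeta_full {a b : ℝ} (ha : 0 < a) (hb : 0 < b) :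
    IntervalIntegrable (fun x : ℝ => x ^ (a-1) * (1-x) ^ (b-1)) volume 0 1 := by
  have p1 := rbeta_half (b := b) ha
  have p2' := (rbeta_half (b := a) hb).comp_sub_left 1
  have : (fun x : ℝ => (1-x) ^ (b-1) * (1-(1-x)) ^ (a-1))
      = fun x : ℝ => x ^ (a-1) * (1-x) ^ (b-1) := by
    funext x; rw [sub_sub_cancel, mul_comm]
  rw [this] at p2'
  norm_num at p2'
  exact p1.trans p2'.symm

lemma rbeta_value {a b : ℝ} (ha : 0 < a) (hb : 0 < b) :
    ∫ x in (0:ℝ)..1, x ^ (a-1) * (1-x) ^ (b-1)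
      = Real.Gamma a * Real.Gamma b / Real.Gamma (a+b) := by
  have hc := Complex.Gamma_mul_Gamma_eq_betaIntegral
    (s := (a:ℂ)) (t := (b:ℂ)) (by simpa using ha) (by simpa using hb)
  have hβ : Complex.betaIntegral a b
      = ((∫ x in (0:ℝ)..1, x ^ (a-1) * (1-x) ^ (b-1) : ℝ) : ℂ) := by
    rw [Complex.betaIntegral, ← intervalIntegral.integral_ofReal]
    apply intervalIntegral.integral_congr
    intro x hx
    rw [Set.uIcc_of_le (by norm_num)] at hx
    push_cast
    rw [Complex.ofReal_cpow hx.1, Complex.ofReal_cpow (by linarith [hx.2])]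
    push_cast
    ring
  rw [hβ, ← Complex.ofReal_add, Complex.Gamma_ofReal, Complex.Gamma_ofReal,
    Complex.Gamma_ofReal, ← Complex.ofReal_mul, ← Complex.ofReal_mul] at hc
  have h := Complex.ofReal_injective hc
  have hG : Real.Gamma (a+b) ≠ 0 := (Real.Gamma_pos_of_pos (by linarith)).ne'
  field_simp
  linarith [h]

lemma sbeta_comp {a b t : ℝ} (ha : 0 < a) (hb : 0 < b) (ht : 0 < t) :
    ∀ u ∈ Set.uIcc (0:ℝ) 1,
      (t - t*u) ^ (a-1) * (t*u) ^ (b-1)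
        = (t ^ (a-1) * t ^ (b-1)) * (u ^ (b-1) * (1-u) ^ (a-1)) := by
  intro u hu
  rw [Set.uIcc_of_le (by norm_num)] at hu
  rw [show t - t*u = t * (1-u) by ring, Real.mul_rpow ht.le (by linarith [hu.2]),
    Real.mul_rpow ht.le hu.1]
  ring

lemma sbeta_intervalIntegrable {a b t : ℝ} (ha : 0 < a) (hb : 0 < b) (ht : 0 < t) :
    IntervalIntegrable (fun x : ℝ => (t-x) ^ (a-1) * x ^ (b-1)) volume 0 t := by
  have base : IntervalIntegrable (fun u : ℝ => u ^ (b-1) * (1-u) ^ (a-1)) volume 0 1 :=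
    rbeta_full hb ha
  have base2 : IntervalIntegrable
      (fun u : ℝ => (t - t*u) ^ (a-1) * (t*u) ^ (b-1)) volume 0 1 := by
    refine ((base.const_mul (t ^ (a-1) * t ^ (b-1))).congr ?_)
    exact fun u hu => (sbeta_comp ha hb ht u (Set.uIoc_subset_uIcc hu)).symm
  have base3 : IntervalIntegrable
      (fun u : ℝ => (fun x : ℝ => (t-x) ^ (a-1) * x ^ (b-1)) (t*u)) volume (0/t) (t/t) := by
    rw [zero_div, div_self ht.ne']
    exact base2
  exact (IntervalIntegrable.comp_mul_left_iff ht.ne').mp base3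

lemma sbeta_integrableOn {a b t : ℝ} (ha : 0 < a) (hb : 0 < b) (ht : 0 < t) :
    IntegrableOn (fun x : ℝ => (t-x) ^ (a-1) * x ^ (b-1)) (Set.Ioo 0 t) volume := by
  rw [← intervalIntegrable_iff_integrableOn_Ioo_of_le ht.le]
  exact sbeta_intervalIntegrable ha hb ht

lemma sbeta_value {a b t : ℝ} (ha : 0 < a) (hb : 0 < b) (ht : 0 < t) :
    ∫ x in Set.Ioo 0 t, (t-x) ^ (a-1) * x ^ (b-1)
      = Real.Gamma a * Real.Gamma b / Real.Gamma (a+b) * t ^ (a+b-1) := by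
  have h0 : ∫ x in Set.Ioo 0 t, (t-x) ^ (a-1) * x ^ (b-1)
      = ∫ x in (0:ℝ)..t, (t-x) ^ (a-1) * x ^ (b-1) := by
    rw [intervalIntegral.integral_of_le ht.le, ← MeasureTheory.integral_Ioc_eq_integral_Ioo]
  have h1 : ∫ x in (0:ℝ)..t, (t-x) ^ (a-1) * x ^ (b-1)
      = t * ∫ u in (0:ℝ)..1, (t - t*u) ^ (a-1) * (t*u) ^ (b-1) := by
    have h := intervalIntegral.mul_integral_comp_mul_left (c := t) (a := 0) (b := 1)
      (f := fun x : ℝ => (t-x) ^ (a-1) * x ^ (b-1))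
    rw [mul_zero, mul_one] at h
    exact h.symm
  have h2 : ∫ u in (0:ℝ)..1, (t - t*u) ^ (a-1) * (t*u) ^ (b-1)
      = (t ^ (a-1) * t ^ (b-1)) * ∫ u in (0:ℝ)..1, u ^ (b-1) * (1-u) ^ (a-1) := by
    rw [← intervalIntegral.integral_const_mul]
    exact intervalIntegral.integral_congr (sbeta_comp ha hb ht)
  rw [h0, h1, h2, rbeta_value hb ha,
    show a+b-1 = 1+((a-1)+(b-1)) by ring, Real.rpow_add ht, Real.rpow_add ht, Real.rpow_one,
    add_comm b a]
  ring


def simChain (t : ℝ) {n : ℕ} (s : Fin n → ℝ) : Fin (n+2) → ℝ := Fin.cons t (Fin.snoc s 0)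

def simSet (n : ℕ) (t : ℝ) : Set (Fin n → ℝ) :=
  {s | ∀ k : Fin (n+1), simChain t s k.succ < simChain t s k.castSucc}

noncomputable def simProd {n : ℕ} (t : ℝ) (α : Fin (n+1) → ℝ) (s : Fin n → ℝ) : ℝ :=
  ∏ k, (simChain t s k.castSucc - simChain t s k.succ) ^ (-α k)

lemma simChain_cons (t x : ℝ) {n : ℕ} (s : Fin n → ℝ) :
    simChain t (Fin.cons x s) = Fin.cons t (simChain x s) := by
  unfold simChain
  rw [← Fin.cons_snoc_eq_snoc_cons]

lemma simChain_succ_castSucc (t : ℝ) {n : ℕ} (s : Fin n → ℝ) (x : ℝ) (j : Fin (n+1)) :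
    simChain t (Fin.cons x s) j.succ.castSucc = simChain x s j.castSucc := by
  rw [simChain_cons, ← Fin.succ_castSucc, Fin.cons_succ]

lemma simChain_succ_succ (t : ℝ) {n : ℕ} (s : Fin n → ℝ) (x : ℝ) (j : Fin (n+1)) :
    simChain t (Fin.cons x s) j.succ.succ = simChain x s j.succ := by
  rw [simChain_cons, Fin.cons_succ]

lemma simChain_zero (t : ℝ) {n : ℕ} (s : Fin n → ℝ) :
    simChain t s ((0 : Fin (n+1)).castSucc) = t := by
  simp [simChain]

lemma simChain_one (t : ℝ) {n : ℕ} (s : Fin n → ℝ) (x : ℝ) :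
    simChain t (Fin.cons x s) ((0 : Fin (n+2)).succ) = x := by
  rw [simChain_cons, Fin.cons_succ]
  simp [simChain]

lemma simSet_cons_mem (n : ℕ) (t x : ℝ) (s : Fin n → ℝ) :
    Fin.cons x s ∈ simSet (n+1) t ↔ x < t ∧ s ∈ simSet n x := by
  unfold simSet
  rw [Set.mem_setOf_eq, Fin.forall_fin_succ]
  constructor
  · rintro ⟨h0, hs⟩
    refine ⟨?_, fun j => ?_⟩
    · rw [simChain_one, simChain_zero] at h0; exact h0
    · have := hs j
      rwa [simChain_succ_succ, simChain_succ_castSucc] at this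
  · rintro ⟨h0, hs⟩
    refine ⟨?_, fun j => ?_⟩
    · rw [simChain_one, simChain_zero]; exact h0
    · rw [simChain_succ_succ, simChain_succ_castSucc]; exact hs j
  
lemma simProd_cons (n : ℕ) (t x : ℝ) (α : Fin (n+2) → ℝ) (s : Fin n → ℝ) :
    simProd t α (Fin.cons x s)
      = (t - x) ^ (-α 0) * simProd x (fun j => α j.succ) s := by
  unfold simProd
  rw [Fin.prod_univ_succ]
  congr 1
  · exact Finset.prod_congr rfl fun j _ => by
      rw [simChain_succ_succ, simChain_succ_castSucc]

lemma simSet_pos {n : ℕ} {t : ℝ} {s : Fin n → ℝ} (hs : s ∈ simSet n t) : 0 < t := by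
  have hanti : StrictAnti (simChain t s) := Fin.strictAnti_iff_succ_lt.mpr hs
  have h0 : (0 : Fin (n+2)) < Fin.last (n+1) := by
    simp [Fin.lt_iff_val_lt_val]
  have h2 := hanti h0
  rw [← Fin.succ_last] at h2
  simp only [simChain, Fin.cons_succ, Fin.snoc_last, Fin.cons_zero] at h2
  exact h2

lemma simSet_factor_pos {n : ℕ} {t : ℝ} {s : Fin n → ℝ} (hs : s ∈ simSet n t)
    (k : Fin (n+1)) : 0 < simChain t s k.castSucc - simChain t s k.succ :=
  sub_pos.mpr (hs k)

lemma simProd_pos {n : ℕ} {t : ℝ} {α : Fin (n+1) → ℝ} {s : Fin n → ℝ}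
    (hs : s ∈ simSet n t) : 0 < simProd t α s :=
  Finset.prod_pos fun k _ => Real.rpow_pos_of_pos (simSet_factor_pos hs k) _

lemma measurable_simChain (t : ℝ) {n : ℕ} (j : Fin (n+2)) :
    Measurable fun s : Fin n → ℝ => simChain t s j := by
  unfold simChain
  refine Fin.cases ?_ (fun i => ?_) j
  · simp only [Fin.cons_zero]; exact measurable_const
  · simp only [Fin.cons_succ]
    refine Fin.lastCases ?_ (fun m => ?_) i
    · simp only [Fin.snoc_last]; exact measurable_const
    · simp only [Fin.snoc_castSucc]; exact measurable_pi_apply m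

lemma measurableSet_simSet (n : ℕ) (t : ℝ) : MeasurableSet (simSet n t) := by
  have : simSet n t = ⋂ k : Fin (n+1),
      {s | simChain t s k.succ < simChain t s k.castSucc} := by
    ext s; simp [simSet, Set.mem_iInter]
  rw [this]
  exact MeasurableSet.iInter fun k =>
    measurableSet_lt (measurable_simChain t _) (measurable_simChain t _)

lemma measurable_simProd {n : ℕ} (t : ℝ) (α : Fin (n+1) → ℝ) :
    Measurable (simProd t α) := by
  unfold simProd
  refine Finset.measurable_prod _ fun k _ => ?_
  have h1 := measurable_simChain (n := n) t k.castSucc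
  have h2 := measurable_simChain (n := n) t k.succ
  fun_prop
lemma simSet_empty_of_nonpos {n : ℕ} {x : ℝ} (hx : x ≤ 0) : simSet n x = ∅ := by
  ext s
  simp only [Set.mem_empty_iff_false, iff_false]
  intro hs
  exact absurd (simSet_pos hs) (not_lt.mpr hx)

lemma inner_eval (n : ℕ) (t : ℝ) (α : Fin (n+2) → ℝ) (hα1 : ∀ k, α k < 1)
    (IH : ∀ t : ℝ, 0 < t → ∀ α' : Fin (n+1) → ℝ, (∀ k, α' k < 1) →
      ∫⁻ s in simSet n t, ENNReal.ofReal (simProd t α' s)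
        = ENNReal.ofReal (t ^ ((n:ℝ) - ∑ k, α' k) * (∏ k, Real.Gamma (1 - α' k)) /
            Real.Gamma ((n:ℝ) + 1 - ∑ k, α' k)))
    (x : ℝ) :
    ∫⁻ s' : Fin n → ℝ,
        (simSet (n+1) t).indicator (fun s => ENNReal.ofReal (simProd t α s)) (Fin.cons x s')
      = (Set.Ioo 0 t).indicator (fun y => ENNReal.ofReal
          ((t - y) ^ (-α 0) * (y ^ ((n:ℝ) - ∑ j : Fin (n+1), α j.succ) *
            (∏ j : Fin (n+1), Real.Gamma (1 - α j.succ)) /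
              Real.Gamma ((n:ℝ) + 1 - ∑ j : Fin (n+1), α j.succ)))) x := by
  by_cases hx : x < t
  · have hpt : ∀ s' : Fin n → ℝ,
        (simSet (n+1) t).indicator (fun s => ENNReal.ofReal (simProd t α s)) (Fin.cons x s')
          = (simSet n x).indicator
              (fun s' => ENNReal.ofReal ((t - x) ^ (-α 0) *
                simProd x (fun j => α j.succ) s')) s' := by
      intro s'
      by_cases hm : s' ∈ simSet n x
      · rw [Set.indicator_of_mem ((simSet_cons_mem n t x s').mpr ⟨hx, hm⟩),
          Set.indicator_of_mem hm, simProd_cons]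
      · rw [Set.indicator_of_notMem, Set.indicator_of_notMem hm]
        intro hmem
        exact hm ((simSet_cons_mem n t x s').mp hmem).2
    simp_rw [hpt]
    rw [lintegral_indicator (measurableSet_simSet n x)]
    have hnn : (0:ℝ) ≤ (t - x) ^ (-α 0) := Real.rpow_nonneg (by linarith) _
    simp_rw [ENNReal.ofReal_mul hnn]
    rw [lintegral_const_mul' _ _ ENNReal.ofReal_ne_top]
    by_cases hx0 : 0 < x
    · rw [IH x hx0 (fun j => α j.succ) (fun j => hα1 j.succ),
        Set.indicator_of_mem (Set.mem_Ioo.mpr ⟨hx0, hx⟩),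
        ← ENNReal.ofReal_mul hnn]
    · rw [simSet_empty_of_nonpos (not_lt.mp hx0), Measure.restrict_empty,
        lintegral_zero_measure, mul_zero,
        Set.indicator_of_notMem (fun h => hx0 (Set.mem_Ioo.mp h).1)]
  · have hpt : ∀ s' : Fin n → ℝ,
        (simSet (n+1) t).indicator (fun s => ENNReal.ofReal (simProd t α s)) (Fin.cons x s')
          = 0 := by
      intro s'
      rw [Set.indicator_of_notMem]
      intro hmem
      exact hx ((simSet_cons_mem n t x s').mp hmem).1
    simp_rw [hpt]
    rw [lintegral_zero, Set.indicator_of_notMem (fun h => hx (Set.mem_Ioo.mp h).2)]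
lemma Gamma_one_sub_pos {c : ℝ} (hc : c < 1) : 0 < Real.Gamma (1 - c) :=
  Real.Gamma_pos_of_pos (by linarith)

lemma simKey : ∀ (n : ℕ) (t : ℝ), 0 < t → ∀ (α : Fin (n+1) → ℝ), (∀ k, α k < 1) →
    ∫⁻ s in simSet n t, ENNReal.ofReal (simProd t α s)
      = ENNReal.ofReal (t ^ ((n:ℝ) - ∑ k, α k) * (∏ k, Real.Gamma (1 - α k)) /
          Real.Gamma ((n:ℝ) + 1 - ∑ k, α k)) := by
  intro n
  induction n with
  | zero =>
    intro t ht α hα1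
    have hset : simSet 0 t = Set.univ := by
      ext s
      simp only [Set.mem_univ, iff_true, simSet, Set.mem_setOf_eq]
      intro k
      have hk : k = 0 := Fin.fin_one_eq_zero k
      subst hk
      simpa [simChain, Fin.snoc] using ht
    have hprod : ∀ s : Fin 0 → ℝ, simProd t α s = t ^ (-α 0) := by
      intro s
      unfold simProd
      rw [Fin.prod_univ_one]
      simp [simChain, Fin.snoc]
    simp_rw [hprod]
    rw [hset, Measure.restrict_univ, lintegral_const]
    have hvol : (volume : Measure (Fin 0 → ℝ)) Set.univ = 1 := by
      rw [MeasureTheory.volume_pi, Measure.pi_univ]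
      simp
    rw [hvol, mul_one]
    congr 1
    rw [Fin.sum_univ_one, Fin.prod_univ_one,
      show ((0:ℕ):ℝ) - α 0 = -α 0 by push_cast; ring,
      show ((0:ℕ):ℝ) + 1 - α 0 = 1 - α 0 by push_cast; ring,
      mul_div_assoc, div_self (Gamma_one_sub_pos (hα1 0)).ne', mul_one]
  | succ n IH =>
    intro t ht α hα1
    rw [← lintegral_indicator (measurableSet_simSet (n+1) t)]
    have hF : Measurable ((simSet (n+1) t).indicator
        (fun s => ENNReal.ofReal (simProd t α s))) :=
      ((measurable_simProd t α).ennreal_ofReal).indicator (measurableSet_simSet _ t)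
    have hcons : Measurable fun p : ℝ × (Fin n → ℝ) => (Fin.cons p.1 p.2 : Fin (n+1) → ℝ) := by
      refine measurable_pi_iff.mpr fun j => ?_
      refine Fin.cases ?_ (fun m => ?_) j
      · simpa using measurable_fst
      · exact (measurable_pi_apply m).comp measurable_snd
    have hG : Measurable fun p : ℝ × (Fin n → ℝ) =>
        (simSet (n+1) t).indicator (fun s => ENNReal.ofReal (simProd t α s))
          (Fin.cons p.1 p.2) := hF.comp hcons
    have transport :
        ∫⁻ s : Fin (n+1) → ℝ,
            (simSet (n+1) t).indicator (fun s => ENNReal.ofReal (simProd t α s)) s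
          = ∫⁻ p : ℝ × (Fin n → ℝ),
              (simSet (n+1) t).indicator (fun s => ENNReal.ofReal (simProd t α s))
                (Fin.cons p.1 p.2)
               := by
      have mp := volume_preserving_piFinSuccAbove (fun _ : Fin (n+1) => ℝ) 0
      rw [← mp.lintegral_comp hG]
      refine lintegral_congr fun s => ?_
      have h2 : (fun j : Fin n => s ((0 : Fin (n+1)).succAbove j)) = Fin.tail s := by
        funext j
        rw [Fin.succAbove_zero]
        rfl
      simp only [MeasurableEquiv.piFinSuccAbove_apply, Fin.insertNthEquiv_symm_apply,
        Fin.removeNth_zero, Fin.cons_self_tail]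
    rw [transport, MeasureTheory.Measure.volume_eq_prod, lintegral_prod _ hG.aemeasurable]
    rw [lintegral_congr (fun x => inner_eval n t α hα1 IH x)]
    rw [lintegral_indicator measurableSet_Ioo]
    set β' := ∑ j : Fin (n+1), α j.succ with hβ'
    set C' := ∏ j : Fin (n+1), Real.Gamma (1 - α j.succ) with hC'
    set a := 1 - α 0 with ha'
    set b := (n:ℝ) + 1 - β' with hb'
    have ha : 0 < a := by rw [ha']; linarith [hα1 0]
    have hb : 0 < b := by
      rw [hb', hβ']
      have h1 : ∑ j : Fin (n+1), α j.succ < ∑ _j : Fin (n+1), (1:ℝ) :=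
        Finset.sum_lt_sum_of_nonempty Finset.univ_nonempty (fun j _ => hα1 j.succ)
      simp only [Finset.sum_const, Finset.card_univ, Fintype.card_fin, nsmul_eq_mul,
        mul_one] at h1
      push_cast at h1 ⊢
      linarith
    have hC'pos : 0 < C' := Finset.prod_pos fun j _ => Gamma_one_sub_pos (hα1 j.succ)
    have hGb : 0 < Real.Gamma b := Real.Gamma_pos_of_pos hb
    have hGab : 0 < Real.Gamma (a + b) := Real.Gamma_pos_of_pos (by linarith)
    have hfun : ∀ x : ℝ,
        ENNReal.ofReal ((t - x) ^ (-α 0) * (x ^ ((n:ℝ) - β') * C' / Real.Gamma ((n:ℝ) + 1 - β')))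
          = ENNReal.ofReal (C' / Real.Gamma b * ((t - x) ^ (a-1) * x ^ (b-1))) := by
      intro x
      congr 1
      rw [show a - 1 = -α 0 by rw [ha']; ring, show b - 1 = (n:ℝ) - β' by rw [hb']; ring,
        show (n:ℝ) + 1 - β' = b by rw [hb']]
      ring
    rw [← hb'] at hfun
    simp_rw [hfun]
    have hint : Integrable (fun x : ℝ => C' / Real.Gamma b * ((t - x) ^ (a-1) * x ^ (b-1)))
        (volume.restrict (Set.Ioo 0 t)) :=
      (sbeta_integrableOn ha hb ht).const_mul _
    have hnn : 0 ≤ᵐ[volume.restrict (Set.Ioo 0 t)]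
        fun x : ℝ => C' / Real.Gamma b * ((t - x) ^ (a-1) * x ^ (b-1)) := by
      refine (ae_restrict_iff' measurableSet_Ioo).2 (ae_of_all _ fun x hx => ?_)
      obtain ⟨hx0, hxt⟩ := Set.mem_Ioo.mp hx
      have h1 : (0:ℝ) ≤ (t - x) ^ (a-1) := Real.rpow_nonneg (by linarith) _
      have h2 : (0:ℝ) ≤ x ^ (b-1) := Real.rpow_nonneg hx0.le _
      have h3 : (0:ℝ) ≤ C' / Real.Gamma b := div_nonneg hC'pos.le hGb.le
      exact mul_nonneg h3 (mul_nonneg h1 h2)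
    rw [← ofReal_integral_eq_lintegral_ofReal hint hnn, integral_const_mul,
      sbeta_value ha hb ht]
    congr 1
    rw [Fin.sum_univ_succ, Fin.prod_univ_succ]
    have hab : Real.Gamma (a + b) = Real.Gamma (((n+1:ℕ):ℝ) + 1 - (α 0 + β')) := by
      congr 1; rw [ha', hb']; push_cast; ring
    rw [show t ^ (a + b - 1) = t ^ (((n+1:ℕ):ℝ) - (α 0 + β')) by
        congr 1; rw [ha', hb']; push_cast; ring,
      hab]
    have hΓ1 : Real.Gamma (1 - α 0) = Real.Gamma a := by rw [ha']
    rw [hΓ1]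
    have halg : ∀ (c gb ga gs T : ℝ), gb ≠ 0 → gs ≠ 0 →
        c / gb * (ga * gb / gs * T) = T * (ga * c) / gs := by
      intro c gb ga gs T h1 h2
      field_simp
    exact halg _ _ _ _ _ hGb.ne' (hab ▸ hGab).ne'
/-- The iterated simplex integral
`∫_{0 < t_n < ⋯ < t₁ < t} ∏_{k=0}^n (t_k - t_{k+1})^{-α_k} dt₁⋯dt_n`
(with the conventions `t₀ = t`, `t_{n+1} = 0`) equals
`t^{n-β₀} (∏_{k=0}^n Γ(1-α_k)) / Γ(n+1-β₀)` where `β₀ = ∑_{k=0}^n α_k`. -/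
theorem simplex_integral_of_beta (n : ℕ) (hn : 1 ≤ n) (t : ℝ) (ht : 0 < t)
    (α : Fin (n + 1) → ℝ) (hα0 : ∀ k, 0 ≤ α k) (hα1 : ∀ k, α k < 1) :
    (∫ s in {s : Fin n → ℝ |
        ∀ k : Fin (n + 1),
          (Fin.cons t (Fin.snoc s 0) : Fin (n + 2) → ℝ) k.succ <
            (Fin.cons t (Fin.snoc s 0) : Fin (n + 2) → ℝ) k.castSucc},
      ∏ k : Fin (n + 1),
        ((Fin.cons t (Fin.snoc s 0) : Fin (n + 2) → ℝ) k.castSucc -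
            (Fin.cons t (Fin.snoc s 0) : Fin (n + 2) → ℝ) k.succ) ^ (-α k)) =
      t ^ ((n : ℝ) - ∑ k, α k) * (∏ k, Real.Gamma (1 - α k)) /
        Real.Gamma ((n : ℝ) + 1 - ∑ k, α k) := by
  have h0 : {s : Fin n → ℝ |
      ∀ k : Fin (n + 1),
        (Fin.cons t (Fin.snoc s 0) : Fin (n + 2) → ℝ) k.succ <
          (Fin.cons t (Fin.snoc s 0) : Fin (n + 2) → ℝ) k.castSucc} = simSet n t := rfl
  have h1 : (fun s : Fin n → ℝ => ∏ k : Fin (n + 1),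
      ((Fin.cons t (Fin.snoc s 0) : Fin (n + 2) → ℝ) k.castSucc -
          (Fin.cons t (Fin.snoc s 0) : Fin (n + 2) → ℝ) k.succ) ^ (-α k)) = simProd t α := rfl
  rw [h0, show (∫ s in simSet n t, ∏ k : Fin (n + 1),
      ((Fin.cons t (Fin.snoc s 0) : Fin (n + 2) → ℝ) k.castSucc -
          (Fin.cons t (Fin.snoc s 0) : Fin (n + 2) → ℝ) k.succ) ^ (-α k))
      = ∫ s in simSet n t, simProd t α s from rfl]
  have hnn : 0 ≤ᵐ[volume.restrict (simSet n t)] simProd t α :=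
    (ae_restrict_iff' (measurableSet_simSet n t)).2
      (ae_of_all _ fun s hs => (simProd_pos hs).le)
  rw [MeasureTheory.integral_eq_lintegral_of_nonneg_ae hnn
    (measurable_simProd t α).aestronglyMeasurable]
  have hkey := simKey n t ht α hα1
  rw [hkey]
  refine ENNReal.toReal_ofReal ?_
  have hsum : ∑ k, α k < (n:ℝ) + 1 := by
    have h1 : ∑ k : Fin (n+1), α k < ∑ _k : Fin (n+1), (1:ℝ) :=
      Finset.sum_lt_sum_of_nonempty Finset.univ_nonempty (fun k _ => hα1 k)
    simp only [Finset.sum_const, Finset.card_univ, Fintype.card_fin, nsmul_eq_mul,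
      mul_one] at h1
    push_cast at h1 ⊢
    linarith
  have hG : 0 < Real.Gamma ((n:ℝ) + 1 - ∑ k, α k) := Real.Gamma_pos_of_pos (by linarith)
  have hP : 0 < ∏ k, Real.Gamma (1 - α k) :=
    Finset.prod_pos fun k _ => Gamma_one_sub_pos (hα1 k)
  exact div_nonneg (mul_nonneg (Real.rpow_nonneg ht.le _) hP.le) hG.le
end

section
/- Let d ≥ 1 and let 𝔪 be an even positive integer, and define G(t,x) = (2π)^{−d} ∫_{ℝ^d} e^{i⟨x,ξ⟩} e^{−t‖ξ‖^𝔪} dξ for t > 0. Then there exists a constant C > 0 such that for all t > 0 and all y ∈ ℝ^d, ∫_{ℝ^d} |G(t, x + y) − G(t, x)| dx ≤ C · min( 1 , t^{−1/𝔪} ‖y‖ ). Consequently, if moreover 𝔪 > d and γ = 2(1 − d/𝔪), then for every T > 0, sup_{t ∈ (0,T)} t^γ ∫_{ℝ^d} |G(t, x+y) − G(t, x)| dx ≤ C · T^{γ − 1/𝔪} ‖y‖, which tends to 0 as y → 0. -/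
open MeasureTheory Real
open scoped ContDiff SchwartzMap FourierTransform RealInnerProductSpace

set_option maxHeartbeats 1000000

/-- The Green's function of `∂_t + (-Δ)^{𝔪/2}`:
`G(t,x) = (2π)^{-d} ∫ e^{i⟨x,ξ⟩} e^{-t‖ξ‖^𝔪} dξ`. -/
noncomputable def greenFn (d : ℕ) (𝔪 : ℝ) (t : ℝ) (x : EuclideanSpace ℝ (Fin d)) : ℂ :=
  (((2 * Real.pi) ^ d)⁻¹ : ℝ) •
    ∫ ξ : EuclideanSpace ℝ (Fin d),
      Complex.exp (Complex.I * (⟪x, ξ⟫ : ℝ)) * (Real.exp (-t * ‖ξ‖ ^ 𝔪) : ℂ)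

-- 1D pieces
noncomputable def uexp : ℝ → ℝ := fun s => Real.exp ((-1) * s)

lemma uexp_contDiff : ContDiff ℝ ∞ uexp :=
  Real.contDiff_exp.comp ((contDiff_const (c := (-1:ℝ))).mul contDiff_id)

lemma norm_iFD_uexp (n : ℕ) (s : ℝ) : ‖iteratedFDeriv ℝ n uexp s‖ = Real.exp (-s) := by
  rw [norm_iteratedFDeriv_eq_norm_iteratedDeriv]
  have : iteratedDeriv n uexp = fun s => (-1:ℝ)^n * Real.exp ((-1)*s) :=
    iteratedDeriv_exp_const_mul n (-1)
  rw [this]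
  simp [abs_of_nonneg, Real.exp_nonneg, abs_mul, Real.abs_exp]

lemma sigma_bound (n : ℕ) : ∃ C : ℝ, ∀ s : ℝ, ‖iteratedFDeriv ℝ n Real.smoothTransition s‖ ≤ C := by
  rcases Nat.eq_zero_or_pos n with rfl | hn
  · exact ⟨1, fun s => by
      simpa [norm_iteratedFDeriv_zero, Real.norm_eq_abs,
        abs_of_nonneg (Real.smoothTransition.nonneg s)] using Real.smoothTransition.le_one s⟩
  · -- support of iteratedFDeriv contained in [0,1]
    have hsupp : Function.support (iteratedFDeriv ℝ n Real.smoothTransition) ⊆ Set.Icc 0 1 := by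
      intro s hs
      by_contra hmem
      rw [Set.mem_Icc] at hmem
      push_neg at hmem
      apply hs
      rcases lt_or_ge s 0 with h0 | h0
      · -- s < 0 : smoothTransition is 0 near s
        have : s ∉ tsupport Real.smoothTransition := by
          intro h
          have : tsupport Real.smoothTransition ⊆ Set.Ici 0 := by
            apply closure_minimal _ isClosed_Ici
            intro u hu
            simp only [Function.mem_support] at hu
            by_contra hu0
            exact hu (Real.smoothTransition.zero_of_nonpos (le_of_not_ge hu0))
          exact absurd (this h) (by simpa using h0)
        exact Function.notMem_support.mp fun hc =>
          this (support_iteratedFDeriv_subset n hc)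
      · have h1 : 1 < s := hmem h0
        -- use τ = smoothTransition - 1
        have hτ : ∀ u, Real.smoothTransition u = (fun v => (Real.smoothTransition v - 1) + 1) u := by
          intro u; simp
        have heq : iteratedFDeriv ℝ n Real.smoothTransition s =
            iteratedFDeriv ℝ n (fun v => Real.smoothTransition v - 1) s := by
          have h2 : iteratedFDeriv ℝ n (fun v => (Real.smoothTransition v - 1) + 1) s =
              iteratedFDeriv ℝ n (fun v => Real.smoothTransition v - 1) s +
              iteratedFDeriv ℝ n (fun _ => (1:ℝ)) s :=
            iteratedFDeriv_add_apply ((Real.smoothTransition.contDiff).sub contDiff_const).contDiffAt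
              contDiff_const.contDiffAt
          have h3 : iteratedFDeriv ℝ n (fun _ : ℝ => (1:ℝ)) s = 0 :=
            congrFun (iteratedFDeriv_const_of_ne hn.ne' (1:ℝ)) s
          calc iteratedFDeriv ℝ n Real.smoothTransition s
              = iteratedFDeriv ℝ n (fun v => (Real.smoothTransition v - 1) + 1) s := by
                congr 1; ext v; simp
            _ = _ := by rw [h2, h3, add_zero]
        rw [heq]
        have : s ∉ tsupport (fun v => Real.smoothTransition v - 1) := by
          intro h
          have hsub : tsupport (fun v => Real.smoothTransition v - 1) ⊆ Set.Iic 1 := by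
            apply closure_minimal _ isClosed_Iic
            intro u hu
            simp only [Function.mem_support, sub_ne_zero] at hu
            by_contra hu1
            exact hu (Real.smoothTransition.one_of_one_le (le_of_not_ge hu1))
          exact absurd (hsub h) (by simpa using h1)
        exact Function.notMem_support.mp fun hc =>
          this (support_iteratedFDeriv_subset n hc)
    have hcs : HasCompactSupport (iteratedFDeriv ℝ n Real.smoothTransition) :=
      HasCompactSupport.intro isCompact_Icc fun s hs =>
        Function.notMem_support.mp fun hc => hs (hsupp hc)
    have hcont : Continuous (iteratedFDeriv ℝ n Real.smoothTransition) :=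
      (Real.smoothTransition.contDiff (n := (⊤ : ℕ∞))).continuous_iteratedFDeriv
        (by exact_mod_cast le_top)
    exact hcs.exists_bound_of_continuous hcont

noncomputable def prodFn : ℝ → ℝ := fun s => uexp s * Real.smoothTransition s

lemma prodFn_contDiff : ContDiff ℝ ∞ prodFn :=
  uexp_contDiff.mul Real.smoothTransition.contDiff

-- pointwise values
lemma prodFn_of_one_le {s : ℝ} (hs : 1 ≤ s) : prodFn s = Real.exp (-s) := by
  simp [prodFn, Real.smoothTransition.one_of_one_le hs, uexp]

-- derivative bound on [0,∞), and 0 for s<0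
lemma prodFn_decay (K n : ℕ) : ∃ C : ℝ, ∀ s : ℝ, ‖s‖ ^ K * ‖iteratedFDeriv ℝ n prodFn s‖ ≤ C := by
  -- uniform bounds on σ derivatives up to n
  have hσ : ∃ C : ℝ, 0 ≤ C ∧ ∀ i ≤ n, ∀ s : ℝ,
      ‖iteratedFDeriv ℝ i Real.smoothTransition s‖ ≤ C := by
    choose Cs hCs using fun i => sigma_bound i
    refine ⟨max 0 ((Finset.range (n+1)).sup' (by simp) Cs), le_max_left _ _, fun i hi s => ?_⟩
    exact le_trans (hCs i s) (le_max_of_le_right (Finset.le_sup' Cs (by simp [Nat.lt_succ_iff, hi])))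
  obtain ⟨Cσ, hCσ0, hCσ⟩ := hσ
  refine ⟨(2^n * Cσ) * (K.factorial * Real.exp 1), fun s => ?_⟩
  rcases lt_or_ge s 0 with hs | hs
  · -- iFD n prodFn s = 0 since prodFn = 0 on (-∞, 0)
    have hzero : iteratedFDeriv ℝ n prodFn s = 0 := by
      have hts : tsupport prodFn ⊆ Set.Ici 0 := by
        apply closure_minimal _ isClosed_Ici
        intro u hu
        simp only [Function.mem_support] at hu
        by_contra hu0
        exact hu (by simp [prodFn, Real.smoothTransition.zero_of_nonpos (le_of_not_ge hu0)])
      exact Function.notMem_support.mp fun hc =>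
        (by simpa using hs.not_ge : s ∉ Set.Ici (0:ℝ)) (hts (support_iteratedFDeriv_subset n hc))
    rw [hzero, norm_zero, mul_zero]
    exact mul_nonneg (mul_nonneg (by positivity) hCσ0) (by positivity)
  · -- s ≥ 0
    have hmul := norm_iteratedFDeriv_mul_le (𝕜 := ℝ) (A := ℝ)
      uexp_contDiff (Real.smoothTransition.contDiff (n := (⊤ : ℕ∞))) s
      (by exact_mod_cast le_top : (n : WithTop ℕ∞) ≤ ∞)
    have hsum : ∑ i ∈ Finset.range (n + 1), (n.choose i : ℝ) * ‖iteratedFDeriv ℝ i uexp s‖ *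
        ‖iteratedFDeriv ℝ (n - i) Real.smoothTransition s‖ ≤ 2^n * Cσ * Real.exp (-s) := by
      have : ∀ i ∈ Finset.range (n+1), (n.choose i : ℝ) * ‖iteratedFDeriv ℝ i uexp s‖ *
          ‖iteratedFDeriv ℝ (n - i) Real.smoothTransition s‖ ≤
          (n.choose i : ℝ) * (Real.exp (-s) * Cσ) := by
        intro i hi
        rw [norm_iFD_uexp, mul_assoc]
        refine mul_le_mul_of_nonneg_left ?_ (by positivity)
        exact mul_le_mul_of_nonneg_left (hCσ _ (Nat.sub_le n i) s) (Real.exp_nonneg _)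
      calc _ ≤ ∑ i ∈ Finset.range (n+1), (n.choose i : ℝ) * (Real.exp (-s) * Cσ) :=
            Finset.sum_le_sum this
        _ = (2:ℝ)^n * (Real.exp (-s) * Cσ) := by
            rw [← Finset.sum_mul]
            norm_cast
            rw [Nat.sum_range_choose]
        _ = 2^n * Cσ * Real.exp (-s) := by ring
    have hK : ‖s‖ ^ K * Real.exp (-s) ≤ K.factorial * Real.exp 1 := by
      have hnorm : ‖s‖ = s := abs_of_nonneg hs
      rw [hnorm]
      have h1 : s ^ K ≤ K.factorial * Real.exp s := by
        have := Real.sum_le_exp_of_nonneg hs (K+1)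
        have hterm : s ^ K / K.factorial ≤ Real.exp s := by
          refine le_trans ?_ this
          exact Finset.single_le_sum (f := fun i => s^i / (i.factorial : ℝ))
            (fun i _ => by positivity) (Finset.self_mem_range_succ K)
        rw [div_le_iff₀ (by positivity)] at hterm
        linarith [hterm]
      calc s ^ K * Real.exp (-s) ≤ (K.factorial * Real.exp s) * Real.exp (-s) :=
            mul_le_mul_of_nonneg_right h1 (Real.exp_nonneg _)
        _ = K.factorial := by rw [mul_assoc, ← Real.exp_add]; simp
        _ ≤ K.factorial * Real.exp 1 := by
            nth_rw 1 [← mul_one (K.factorial : ℝ)]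
            exact mul_le_mul_of_nonneg_left
              (by nlinarith [Real.add_one_le_exp (1:ℝ)] : (1:ℝ) ≤ Real.exp 1) (by positivity)
    calc ‖s‖ ^ K * ‖iteratedFDeriv ℝ n prodFn s‖
        ≤ ‖s‖ ^ K * (2^n * Cσ * Real.exp (-s)) := by
          refine mul_le_mul_of_nonneg_left (le_trans hmul hsum) (by positivity)
      _ = (2^n * Cσ) * (‖s‖ ^ K * Real.exp (-s)) := by ring
      _ ≤ (2^n * Cσ) * (K.factorial * Real.exp 1) :=
          mul_le_mul_of_nonneg_left hK (by positivity)

noncomputable def fC : 𝓢(ℝ, ℂ) where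
  toFun := fun s => (prodFn s : ℂ)
  smooth' := Complex.ofRealCLM.contDiff.comp prodFn_contDiff
  decay' := by
    intro K n
    obtain ⟨C, hC⟩ := prodFn_decay K n
    refine ⟨C, fun s => ?_⟩
    have : ‖iteratedFDeriv ℝ n (fun s => (prodFn s : ℂ)) s‖ = ‖iteratedFDeriv ℝ n prodFn s‖ := by
      have h := Complex.ofRealLI.norm_iteratedFDeriv_comp_left (𝕜 := ℝ) (x := s)
        prodFn_contDiff.contDiffAt (by exact_mod_cast le_top : ((n:ℕ∞) : WithTop ℕ∞) ≤ ∞)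
      simpa [Function.comp_def] using h
    rw [this]; exact hC s

lemma fC_apply (s : ℝ) : fC s = ((Real.exp ((-1)*s) * Real.smoothTransition s : ℝ) : ℂ) := rfl

section TG
variable {E : Type*} [NormedAddCommGroup E] [NormedSpace ℝ E]

lemma htg_mul {f g : E → ℝ} (hf : Function.HasTemperateGrowth f)
    (hg : Function.HasTemperateGrowth g) :
    Function.HasTemperateGrowth (fun x => f x * g x) := by
  refine ⟨hf.1.mul hg.1, fun n => ?_⟩
  obtain ⟨kf, Cf, hCf0, hCf⟩ := hf.norm_iteratedFDeriv_le_uniform n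
  obtain ⟨kg, Cg, hCg0, hCg⟩ := hg.norm_iteratedFDeriv_le_uniform n
  refine ⟨kf + kg, 2^n * (Cf * Cg), fun x => ?_⟩
  calc ‖iteratedFDeriv ℝ n (fun x => f x * g x) x‖
      ≤ ∑ i ∈ Finset.range (n+1), (n.choose i : ℝ) * ‖iteratedFDeriv ℝ i f x‖ *
          ‖iteratedFDeriv ℝ (n-i) g x‖ :=
        norm_iteratedFDeriv_mul_le hf.1 hg.1 x (by exact_mod_cast le_top)
    _ ≤ ∑ i ∈ Finset.range (n+1), (n.choose i : ℝ) * (Cf * Cg * (1+‖x‖)^(kf+kg)) := by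
        refine Finset.sum_le_sum fun i hi => ?_
        rw [mul_assoc]
        refine mul_le_mul_of_nonneg_left ?_ (by positivity)
        have h1 := hCf i (Nat.lt_succ_iff.mp (Finset.mem_range.mp hi)) x
        have h2 := hCg (n-i) (Nat.sub_le n i) x
        calc ‖iteratedFDeriv ℝ i f x‖ * ‖iteratedFDeriv ℝ (n-i) g x‖
            ≤ (Cf * (1+‖x‖)^kf) * (Cg * (1+‖x‖)^kg) :=
              mul_le_mul h1 h2 (norm_nonneg _) (by positivity)
          _ = Cf * Cg * (1+‖x‖)^(kf+kg) := by rw [pow_add]; ring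
    _ = 2^n * (Cf * Cg) * (1+‖x‖)^(kf+kg) := by
        rw [← Finset.sum_mul]
        have : ∑ i ∈ Finset.range (n+1), (n.choose i : ℝ) = 2^n := by
          norm_cast; rw [Nat.sum_range_choose]
        rw [this]; ring

lemma htg_add {f g : E → ℝ} (hf : Function.HasTemperateGrowth f)
    (hg : Function.HasTemperateGrowth g) :
    Function.HasTemperateGrowth (fun x => f x + g x) := by
  refine ⟨hf.1.add hg.1, fun n => ?_⟩
  obtain ⟨kf, Cf, hCf0, hCf⟩ := hf.norm_iteratedFDeriv_le_uniform n
  obtain ⟨kg, Cg, hCg0, hCg⟩ := hg.norm_iteratedFDeriv_le_uniform n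
  refine ⟨kf + kg, Cf + Cg, fun x => ?_⟩
  have key : iteratedFDeriv ℝ n (fun x => f x + g x) x =
      iteratedFDeriv ℝ n f x + iteratedFDeriv ℝ n g x :=
    iteratedFDeriv_add_apply (hf.1.contDiffAt.of_le (by exact_mod_cast le_top))
      (hg.1.contDiffAt.of_le (by exact_mod_cast le_top))
  rw [key]
  have h1 : (1+‖x‖)^kf ≤ (1+‖x‖)^(kf+kg) :=
    pow_le_pow_right₀ (by linarith [norm_nonneg x]) (by omega)
  have h2 : (1+‖x‖)^kg ≤ (1+‖x‖)^(kf+kg) :=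
    pow_le_pow_right₀ (by linarith [norm_nonneg x]) (by omega)
  calc ‖iteratedFDeriv ℝ n f x + iteratedFDeriv ℝ n g x‖
      ≤ Cf * (1+‖x‖)^kf + Cg * (1+‖x‖)^kg :=
        (norm_add_le _ _).trans (add_le_add (hCf n le_rfl x) (hCg n le_rfl x))
    _ ≤ Cf * (1+‖x‖)^(kf+kg) + Cg * (1+‖x‖)^(kf+kg) := by
        exact add_le_add (mul_le_mul_of_nonneg_left h1 hCf0) (mul_le_mul_of_nonneg_left h2 hCg0)
    _ = (Cf + Cg) * (1+‖x‖)^(kf+kg) := by ring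

lemma htg_sum {ι : Type*} (s : Finset ι) (f : ι → E → ℝ)
    (hf : ∀ i ∈ s, Function.HasTemperateGrowth (f i)) :
    Function.HasTemperateGrowth (fun x => ∑ i ∈ s, f i x) := by
  classical
  induction s using Finset.induction with
  | empty => simpa using Function.HasTemperateGrowth.const (0:ℝ)
  | @insert a s ha ih =>
    simp only [Finset.sum_insert ha]
    exact htg_add (hf a (Finset.mem_insert_self a s))
      (ih fun i hi => hf i (Finset.mem_insert_of_mem hi))

lemma htg_pow {f : E → ℝ} (hf : Function.HasTemperateGrowth f) (k : ℕ) :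
    Function.HasTemperateGrowth (fun x => (f x)^k) := by
  induction k with
  | zero => simpa using Function.HasTemperateGrowth.const (1:ℝ)
  | succ k ih =>
    simp only [pow_succ]
    exact htg_mul ih hf

end TG

lemma q_temperate (d k : ℕ) : Function.HasTemperateGrowth
    (fun x : EuclideanSpace ℝ (Fin d) => 1 + ((2*π)^(2*k) : ℝ) *
      (∑ i, x i * x i)^k) := by
  have hQ : Function.HasTemperateGrowth
      (fun x : EuclideanSpace ℝ (Fin d) => ∑ i, x i * x i) := by
    apply htg_sum
    intro i _
    exact htg_mul (EuclideanSpace.proj (𝕜 := ℝ) i).hasTemperateGrowth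
      (EuclideanSpace.proj (𝕜 := ℝ) i).hasTemperateGrowth
  exact htg_add (Function.HasTemperateGrowth.const 1)
    (htg_mul (Function.HasTemperateGrowth.const _) (htg_pow hQ k))

lemma Q_eq_normsq {d : ℕ} (x : EuclideanSpace ℝ (Fin d)) :
    ∑ i, x i * x i = ‖x‖^2 := by
  rw [EuclideanSpace.norm_eq]
  rw [Real.sq_sqrt (Finset.sum_nonneg fun i _ => sq_nonneg _)]
  congr 1; ext i; rw [Real.norm_eq_abs, sq_abs]; ring

lemma q_upper (d k : ℕ) (hk : 1 ≤ k) :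
    ∃ (K : ℕ) (C : ℝ), ∀ x : EuclideanSpace ℝ (Fin d), ‖x‖ ≤ C * (1 + ‖(1 + ((2*π)^(2*k) : ℝ) *
      (∑ i, x i * x i)^k : ℝ)‖)^K := by
  refine ⟨1, 1, fun x => ?_⟩
  rw [pow_one, one_mul, Real.norm_eq_abs, Q_eq_normsq]
  have hc : (1:ℝ) ≤ (2*π)^(2*k) := one_le_pow₀ (by nlinarith [Real.pi_gt_three])
  have hq0 : (0:ℝ) ≤ (2*π)^(2*k) * (‖x‖^2)^k := by positivity
  rcases le_or_gt ‖x‖ 1 with h | h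
  · calc ‖x‖ ≤ 1 := h
      _ ≤ 1 + |1 + (2*π)^(2*k) * (‖x‖^2)^k| := by
          have : (0:ℝ) ≤ |1 + (2*π)^(2*k) * (‖x‖^2)^k| := abs_nonneg _
          linarith
  · have h1 : ‖x‖ ≤ ‖x‖^(2*k) := le_self_pow₀ h.le (by omega)
    have h2 : ‖x‖^(2*k) = (‖x‖^2)^k := by rw [← pow_mul, mul_comm]
    have h3 : (‖x‖^2)^k ≤ (2*π)^(2*k) * (‖x‖^2)^k := by
      nth_rw 1 [← one_mul ((‖x‖^2)^k)]
      exact mul_le_mul_of_nonneg_right hc (by positivity)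
    rw [abs_of_nonneg (by linarith)]
    linarith

noncomputable def gS (d k : ℕ) (hk : 1 ≤ k) : 𝓢(EuclideanSpace ℝ (Fin d), ℂ) :=
  Real.exp 1 • (SchwartzMap.compCLM ℝ (q_temperate d k) (q_upper d k hk) fC)

lemma gS_apply (d k : ℕ) (hk : 1 ≤ k) (x : EuclideanSpace ℝ (Fin d)) :
    gS d k hk x = ((Real.exp (-((2*π)^(2*k) * (‖x‖^2)^k)) : ℝ) : ℂ) := by
  have hnn : (0:ℝ) ≤ (2*π)^(2*k) * (‖x‖^2)^k := by positivity
  have h1 : (1:ℝ) ≤ 1 + (2*π)^(2*k) * (∑ i, x i * x i)^k := by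
    rw [Q_eq_normsq]; linarith
  simp only [gS, SchwartzMap.smul_apply, SchwartzMap.compCLM_apply, Function.comp_apply, fC_apply]
  rw [Real.smoothTransition.one_of_one_le h1, Q_eq_normsq, mul_one, Complex.real_smul,
    ← Complex.ofReal_mul, ← Real.exp_add]
  congr 1
  ring_nf

noncomputable def WS (d k : ℕ) (hk : 1 ≤ k) : 𝓢(EuclideanSpace ℝ (Fin d), ℂ) :=
  SchwartzMap.fourierTransformCLM ℂ (gS d k hk)

lemma green_one_eq (d k : ℕ) (hk : 1 ≤ k) (x : EuclideanSpace ℝ (Fin d)) :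
    greenFn d ((2*k : ℕ) : ℝ) 1 x = WS d k hk (-x) := by
  have hπ : (0:ℝ) < 2 * π := by positivity
  have key : ∀ η : EuclideanSpace ℝ (Fin d),
      Complex.exp (Complex.I * (⟪x, (2*π) • η⟫ : ℝ)) *
        (Real.exp (-1 * ‖(2*π) • η‖ ^ ((2*k : ℕ) : ℝ)) : ℂ) =
      Complex.exp ((↑(-2 * π * ⟪η, -x⟫) * Complex.I)) • gS d k hk η := by
    intro η
    rw [gS_apply]
    have h1 : ‖(2*π) • η‖ ^ ((2*k : ℕ) : ℝ) = (2*π)^(2*k) * (‖η‖^2)^k := by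
      rw [Real.rpow_natCast, norm_smul, Real.norm_eq_abs, abs_of_pos hπ, mul_pow, ← pow_mul]
    rw [h1]
    have h2 : (⟪x, (2*π) • η⟫ : ℝ) = 2 * π * ⟪x, η⟫ := real_inner_smul_right x η (2*π)
    have h3 : -2 * π * (⟪η, -x⟫ : ℝ) = 2 * π * ⟪x, η⟫ := by
      rw [inner_neg_right, real_inner_comm]; ring
    rw [h2, h3, smul_eq_mul]
    rw [mul_comm Complex.I]
    norm_num
  have hsub : (∫ ξ : EuclideanSpace ℝ (Fin d),
      Complex.exp (Complex.I * (⟪x, ξ⟫ : ℝ)) * (Real.exp (-1 * ‖ξ‖ ^ ((2*k:ℕ) : ℝ)) : ℂ)) =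
      ((2*π)^d : ℝ) • ∫ η : EuclideanSpace ℝ (Fin d),
        Complex.exp (Complex.I * (⟪x, (2*π) • η⟫ : ℝ)) *
          (Real.exp (-1 * ‖(2*π) • η‖ ^ ((2*k:ℕ) : ℝ)) : ℂ) := by
    rw [MeasureTheory.Measure.integral_comp_smul (μ := volume)
      (f := fun ξ : EuclideanSpace ℝ (Fin d) =>
        Complex.exp (Complex.I * (⟪x, ξ⟫ : ℝ)) * (Real.exp (-1 * ‖ξ‖ ^ ((2*k:ℕ) : ℝ)) : ℂ))
      (2*π)]
    rw [smul_smul, finrank_euclideanSpace_fin]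
    rw [abs_of_pos (by positivity : (0:ℝ) < ((2*π)^d)⁻¹)]
    rw [mul_inv_cancel₀ (by positivity : ((2*π:ℝ))^d ≠ 0), one_smul]
  rw [greenFn, hsub, smul_smul, inv_mul_cancel₀ (by positivity : ((2*π:ℝ))^d ≠ 0), one_smul]
  rw [WS, SchwartzMap.fourierTransformCLM_apply, SchwartzMap.fourier_coe, Real.fourier_eq']
  exact integral_congr_ae (Filter.Eventually.of_forall key)

lemma green_scale (d 𝔪 : ℕ) (h𝔪 : 0 < 𝔪) {t : ℝ} (ht : 0 < t) (x : EuclideanSpace ℝ (Fin d)) :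
    greenFn d 𝔪 t x = ((t ^ (-(1:ℝ)/𝔪))^d : ℝ) •
      greenFn d 𝔪 1 ((t ^ (-(1:ℝ)/𝔪) : ℝ) • x) := by
  set r : ℝ := t ^ (-(1:ℝ)/𝔪) with hr_def
  have hr : 0 < r := Real.rpow_pos_of_pos ht _
  have hr𝔪 : t * r ^ (𝔪:ℕ) = 1 := by
    rw [hr_def, ← Real.rpow_natCast (t ^ (-(1:ℝ)/𝔪)) 𝔪, ← Real.rpow_mul ht.le]
    rw [div_mul_cancel₀ (-(1:ℝ)) (by exact_mod_cast h𝔪.ne' : (𝔪:ℝ) ≠ 0)]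
    rw [Real.rpow_neg_one]
    field_simp
  have key : ∀ η : EuclideanSpace ℝ (Fin d),
      Complex.exp (Complex.I * (⟪x, r • η⟫ : ℝ)) *
        (Real.exp (-t * ‖r • η‖ ^ ((𝔪:ℕ) : ℝ)) : ℂ) =
      Complex.exp (Complex.I * (⟪r • x, η⟫ : ℝ)) *
        (Real.exp (-1 * ‖η‖ ^ ((𝔪:ℕ) : ℝ)) : ℂ) := by
    intro η
    have h1 : -t * ‖r • η‖ ^ ((𝔪:ℕ) : ℝ) = -1 * ‖η‖ ^ ((𝔪:ℕ) : ℝ) := by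
      rw [Real.rpow_natCast, Real.rpow_natCast, norm_smul, Real.norm_eq_abs, abs_of_pos hr,
        mul_pow]
      have : t * (r ^ (𝔪:ℕ) * ‖η‖ ^ (𝔪:ℕ)) = ‖η‖ ^ (𝔪:ℕ) := by
        rw [← mul_assoc, hr𝔪, one_mul]
      nlinarith [this]
    have h2 : (⟪x, r • η⟫ : ℝ) = ⟪r • x, η⟫ := by
      rw [real_inner_smul_right, real_inner_smul_left]
    rw [h1, h2]
  have hsub : (∫ ξ : EuclideanSpace ℝ (Fin d),
      Complex.exp (Complex.I * (⟪x, ξ⟫ : ℝ)) * (Real.exp (-t * ‖ξ‖ ^ ((𝔪:ℕ) : ℝ)) : ℂ)) =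
      (r^d : ℝ) • ∫ η : EuclideanSpace ℝ (Fin d),
        Complex.exp (Complex.I * (⟪x, r • η⟫ : ℝ)) *
          (Real.exp (-t * ‖r • η‖ ^ ((𝔪:ℕ) : ℝ)) : ℂ) := by
    rw [MeasureTheory.Measure.integral_comp_smul (μ := volume)
      (f := fun ξ : EuclideanSpace ℝ (Fin d) =>
        Complex.exp (Complex.I * (⟪x, ξ⟫ : ℝ)) * (Real.exp (-t * ‖ξ‖ ^ ((𝔪:ℕ) : ℝ)) : ℂ)) r]
    rw [smul_smul, finrank_euclideanSpace_fin]
    rw [abs_of_pos (by positivity : (0:ℝ) < (r^d)⁻¹)]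
    rw [mul_inv_cancel₀ (by positivity : (r:ℝ)^d ≠ 0), one_smul]
  rw [greenFn, hsub]
  simp_rw [key]
  rw [greenFn, smul_comm]

lemma green_L1_transfer (d 𝔪 : ℕ) (h𝔪 : 0 < 𝔪) {t : ℝ} (ht : 0 < t)
    (y : EuclideanSpace ℝ (Fin d)) :
    (∫ x : EuclideanSpace ℝ (Fin d), ‖greenFn d 𝔪 t (x + y) - greenFn d 𝔪 t x‖) =
    ∫ x : EuclideanSpace ℝ (Fin d),
      ‖greenFn d 𝔪 1 (x + (t ^ (-(1:ℝ)/𝔪) : ℝ) • y) - greenFn d 𝔪 1 x‖ := by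
  set r : ℝ := t ^ (-(1:ℝ)/𝔪) with hr_def
  have hr : 0 < r := Real.rpow_pos_of_pos ht _
  have step1 : ∀ x : EuclideanSpace ℝ (Fin d),
      ‖greenFn d 𝔪 t (x + y) - greenFn d 𝔪 t x‖ =
      (r^d : ℝ) * ‖greenFn d 𝔪 1 (r • x + r • y) - greenFn d 𝔪 1 (r • x)‖ := by
    intro x
    rw [green_scale d 𝔪 h𝔪 ht (x+y), green_scale d 𝔪 h𝔪 ht x, ← smul_sub, norm_smul,
      Real.norm_eq_abs, abs_of_pos (by positivity), smul_add]
  simp_rw [step1]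
  rw [MeasureTheory.integral_const_mul]
  have step2 : (∫ x : EuclideanSpace ℝ (Fin d),
      ‖greenFn d 𝔪 1 (r • x + r • y) - greenFn d 𝔪 1 (r • x)‖) =
      ((r^d)⁻¹ : ℝ) • ∫ u : EuclideanSpace ℝ (Fin d),
        ‖greenFn d 𝔪 1 (u + r • y) - greenFn d 𝔪 1 u‖ := by
    have := MeasureTheory.Measure.integral_comp_smul (μ := volume)
      (f := fun u : EuclideanSpace ℝ (Fin d) =>
        ‖greenFn d 𝔪 1 (u + r • y) - greenFn d 𝔪 1 u‖) r
    rw [finrank_euclideanSpace_fin, abs_of_pos (by positivity : (0:ℝ) < (r^d)⁻¹)] at this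
    exact this
  rw [step2, smul_eq_mul, ← mul_assoc, mul_inv_cancel₀ (by positivity : (r:ℝ)^d ≠ 0), one_mul]

variable {d : ℕ}

local notation "E" => EuclideanSpace ℝ (Fin d)

lemma integrable_translate {g : EuclideanSpace ℝ (Fin d) → ℝ} (hg : Integrable g
    (volume : Measure (EuclideanSpace ℝ (Fin d)))) (c : EuclideanSpace ℝ (Fin d)) :
    Integrable (fun u => g (u + c)) (volume : Measure (EuclideanSpace ℝ (Fin d))) := by
  have hmp : MeasurePreserving (fun u : EuclideanSpace ℝ (Fin d) => u + c) volume volume :=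
    measurePreserving_add_right volume c
  exact memLp_one_iff_integrable.mp
    ((memLp_one_iff_integrable.mpr hg).comp_measurePreserving hmp)

lemma schwartz_translate_L1 (W : 𝓢(EuclideanSpace ℝ (Fin d), ℂ)) :
    ∃ C : ℝ, 0 < C ∧ ∀ h : EuclideanSpace ℝ (Fin d),
      (∫ x : EuclideanSpace ℝ (Fin d), ‖W (x + h) - W x‖) ≤ C * min 1 ‖h‖ := by
  classical
  set DW : 𝓢(EuclideanSpace ℝ (Fin d), EuclideanSpace ℝ (Fin d) →L[ℝ] ℂ) :=
    SchwartzMap.fderivCLM ℝ (EuclideanSpace ℝ (Fin d)) ℂ W with hDW_def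
  have hDW : ∀ u, DW u = fderiv ℝ W u := fun u => SchwartzMap.fderivCLM_apply ℝ W u
  set A : ℝ := ∫ x : EuclideanSpace ℝ (Fin d), ‖W x‖ with hA_def
  set B : ℝ := ∫ x : EuclideanSpace ℝ (Fin d), ‖DW x‖ with hB_def
  have hA0 : 0 ≤ A := integral_nonneg fun x => norm_nonneg _
  have hB0 : 0 ≤ B := integral_nonneg fun x => norm_nonneg _
  have hWint : Integrable (fun x : EuclideanSpace ℝ (Fin d) => W x) volume := W.integrable
  have hDWnormint : Integrable (fun x : EuclideanSpace ℝ (Fin d) => ‖DW x‖) volume :=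
    DW.integrable.norm
  refine ⟨max (2*A) B + 1, by positivity, fun h => ?_⟩
  -- integrability of the difference
  have hWth : Integrable (fun x : EuclideanSpace ℝ (Fin d) => W (x + h)) volume := by
    have := (integrable_translate (g := fun x => ‖W x‖) hWint.norm h)
    -- use measure preserving directly on complex-valued
    exact memLp_one_iff_integrable.mp
      ((memLp_one_iff_integrable.mpr hWint).comp_measurePreserving
        (measurePreserving_add_right volume h))
  have hdiffint : Integrable
      (fun x : EuclideanSpace ℝ (Fin d) => ‖W (x + h) - W x‖) volume :=
    (hWth.sub hWint).norm
  -- Bound 1 : by 2A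
  have bound1 : (∫ x : EuclideanSpace ℝ (Fin d), ‖W (x + h) - W x‖) ≤ 2 * A := by
    have step : (∫ x : EuclideanSpace ℝ (Fin d), ‖W (x + h) - W x‖) ≤
        ∫ x : EuclideanSpace ℝ (Fin d), (‖W (x + h)‖ + ‖W x‖) := by
      refine integral_mono hdiffint (hWth.norm.add hWint.norm) fun x => norm_sub_le _ _
    rw [integral_add hWth.norm hWint.norm] at step
    have htrans : (∫ x : EuclideanSpace ℝ (Fin d), ‖W (x + h)‖) = A := by
      rw [hA_def]
      exact integral_add_right_eq_self (fun x : EuclideanSpace ℝ (Fin d) => ‖W x‖) h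
    rw [htrans] at step
    linarith
  -- Bound 2 : by B * ‖h‖
  have bound2 : (∫ x : EuclideanSpace ℝ (Fin d), ‖W (x + h) - W x‖) ≤ B * ‖h‖ := by
    -- pointwise FTC bound
    have hptw : ∀ x : EuclideanSpace ℝ (Fin d), ‖W (x + h) - W x‖ ≤
        (∫ s in (0:ℝ)..1, ‖DW (x + s • h)‖) * ‖h‖ := by
      intro x
      have hderiv : ∀ s ∈ Set.uIcc (0:ℝ) 1, HasDerivAt (fun s : ℝ => W (x + s • h))
          ((DW (x + s • h)) h) s := by
        intro s _
        have hline : HasDerivAt (fun s : ℝ => x + s • h) h s := by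
          simpa using ((hasDerivAt_id s).smul_const h).const_add x
        have hW : HasFDerivAt (fun u => W u) (fderiv ℝ W (x + s • h)) (x + s • h) :=
          (W.differentiable.differentiableAt).hasFDerivAt
        rw [hDW]
        exact hW.comp_hasDerivAt s hline
      have hcontDW : Continuous fun s : ℝ => DW (x + s • h) :=
        DW.continuous.comp (by continuity)
      have hcontφ : Continuous fun s : ℝ => (DW (x + s • h)) h :=
        (ContinuousLinearMap.apply ℝ ℂ h).continuous.comp hcontDW
      have hftc : (∫ s in (0:ℝ)..1, (DW (x + s • h)) h) =
          W (x + (1:ℝ) • h) - W (x + (0:ℝ) • h) :=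
        intervalIntegral.integral_eq_sub_of_hasDerivAt hderiv
          (hcontφ.intervalIntegrable 0 1)
      simp only [one_smul, zero_smul, add_zero] at hftc
      calc ‖W (x + h) - W x‖ = ‖∫ s in (0:ℝ)..1, (DW (x + s • h)) h‖ := by rw [hftc]
        _ ≤ ∫ s in (0:ℝ)..1, ‖(DW (x + s • h)) h‖ :=
            intervalIntegral.norm_integral_le_integral_norm zero_le_one
        _ ≤ ∫ s in (0:ℝ)..1, ‖DW (x + s • h)‖ * ‖h‖ := by
            refine intervalIntegral.integral_mono_on zero_le_one
              (hcontφ.norm.intervalIntegrable 0 1)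
              ((hcontDW.norm.mul continuous_const).intervalIntegrable 0 1)
              fun s _ => (DW (x + s • h)).le_opNorm h
        _ = (∫ s in (0:ℝ)..1, ‖DW (x + s • h)‖) * ‖h‖ :=
            intervalIntegral.integral_mul_const _ _
    -- Fubini setup
    set ν : Measure ℝ := volume.restrict (Set.Ioc (0:ℝ) 1) with hν_def
    set Ψ : ℝ × EuclideanSpace ℝ (Fin d) → ℝ := fun p => ‖DW (p.2 + p.1 • h)‖ with hΨ_def
    have hΨcont : Continuous Ψ := by
      apply Continuous.norm
      exact DW.continuous.comp (continuous_snd.add (continuous_fst.smul continuous_const))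
    have hΨmeas : AEStronglyMeasurable Ψ (ν.prod volume) := hΨcont.aestronglyMeasurable
    have hslice : ∀ s : ℝ, Integrable (fun u : EuclideanSpace ℝ (Fin d) => Ψ (s, u)) volume := by
      intro s
      simpa [hΨ_def] using integrable_translate hDWnormint (s • h)
    have hmarg : ∀ s : ℝ, (∫ u : EuclideanSpace ℝ (Fin d), Ψ (s, u)) = B := by
      intro s
      simp only [hΨ_def]
      rw [hB_def]
      exact integral_add_right_eq_self (fun u : EuclideanSpace ℝ (Fin d) => ‖DW u‖) (s • h)
    have hΨint : Integrable Ψ (ν.prod volume) := by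
      rw [integrable_prod_iff hΨmeas]
      constructor
      · exact Filter.Eventually.of_forall fun s => hslice s
      · have : (fun s : ℝ => ∫ u : EuclideanSpace ℝ (Fin d), ‖Ψ (s, u)‖) = fun _ => B := by
          funext s
          have : ∀ u : EuclideanSpace ℝ (Fin d), ‖Ψ (s, u)‖ = Ψ (s, u) := fun u =>
            norm_of_nonneg (norm_nonneg _)
          simp_rw [this]
          exact hmarg s
        rw [this]
        exact integrable_const B
    -- the iterated-integral function is integrable
    have hgint : Integrable (fun u : EuclideanSpace ℝ (Fin d) => ∫ s, Ψ (s, u) ∂ν) volume :=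
      hΨint.integral_prod_right
    have hswap : (∫ s, (∫ u : EuclideanSpace ℝ (Fin d), Ψ (s, u)) ∂ν) =
        ∫ u : EuclideanSpace ℝ (Fin d), (∫ s, Ψ (s, u) ∂ν) :=
      integral_integral_swap hΨint
    have hBeq : (∫ u : EuclideanSpace ℝ (Fin d), (∫ s, Ψ (s, u) ∂ν)) = B := by
      rw [← hswap]
      have : (fun s : ℝ => ∫ u : EuclideanSpace ℝ (Fin d), Ψ (s, u)) = fun _ => B :=
        funext hmarg
      rw [this, integral_const]
      simp [hν_def, Real.volume_Ioc]
    -- interval integral = integral over ν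
    have hinterval : ∀ u : EuclideanSpace ℝ (Fin d),
        (∫ s in (0:ℝ)..1, ‖DW (u + s • h)‖) = ∫ s, Ψ (s, u) ∂ν := by
      intro u
      rw [intervalIntegral.integral_of_le zero_le_one]
    calc (∫ x : EuclideanSpace ℝ (Fin d), ‖W (x + h) - W x‖)
        ≤ ∫ x : EuclideanSpace ℝ (Fin d), (∫ s, Ψ (s, x) ∂ν) * ‖h‖ := by
          refine integral_mono hdiffint (hgint.mul_const _) fun x => ?_
          have := hptw x
          rwa [hinterval x] at this
      _ = (∫ x : EuclideanSpace ℝ (Fin d), (∫ s, Ψ (s, x) ∂ν)) * ‖h‖ :=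
          integral_mul_const _ _
      _ = B * ‖h‖ := by rw [hBeq]
  -- combine
  rcases le_or_gt ‖h‖ 1 with hle | hgt
  · rw [min_eq_right hle]
    calc (∫ x : EuclideanSpace ℝ (Fin d), ‖W (x + h) - W x‖) ≤ B * ‖h‖ := bound2
      _ ≤ (max (2*A) B + 1) * ‖h‖ := by
          refine mul_le_mul_of_nonneg_right ?_ (norm_nonneg _)
          calc B ≤ max (2*A) B := le_max_right _ _
            _ ≤ max (2*A) B + 1 := by linarith
  · rw [min_eq_left hgt.le]
    calc (∫ x : EuclideanSpace ℝ (Fin d), ‖W (x + h) - W x‖) ≤ 2*A := bound1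
      _ ≤ (max (2*A) B + 1) * 1 := by
          rw [mul_one]
          calc 2*A ≤ max (2*A) B := le_max_left _ _
            _ ≤ max (2*A) B + 1 := by linarith


/-- `L¹` modulus of continuity of the Green's function: there is `C > 0` with
`∫ |G(t,x+y) - G(t,x)| dx ≤ C min(1, t^{-1/𝔪}‖y‖)` for all `t > 0`, `y`; consequently, if
`𝔪 > d` and `γ = 2(1 - d/𝔪)`, then for every `T > 0` and `t ∈ (0,T)`,
`t^γ ∫ |G(t,x+y) - G(t,x)| dx ≤ C T^{γ - 1/𝔪} ‖y‖`. -/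
theorem greenFn_L1_modulus_of_continuity (d : ℕ) (hd : 1 ≤ d) (𝔪 : ℕ) (h𝔪 : 0 < 𝔪)
    (heven : Even 𝔪) :
    ∃ C : ℝ, 0 < C ∧
      (∀ t : ℝ, 0 < t → ∀ y : EuclideanSpace ℝ (Fin d),
        (∫ x : EuclideanSpace ℝ (Fin d),
            ‖greenFn d 𝔪 t (x + y) - greenFn d 𝔪 t x‖) ≤
          C * min 1 (t ^ (-(1 : ℝ) / 𝔪) * ‖y‖)) ∧
      ((d : ℝ) < 𝔪 → ∀ T : ℝ, 0 < T → ∀ t : ℝ, 0 < t → t < T →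
        ∀ y : EuclideanSpace ℝ (Fin d),
          t ^ (2 * (1 - (d : ℝ) / 𝔪)) *
              ∫ x : EuclideanSpace ℝ (Fin d),
                ‖greenFn d 𝔪 t (x + y) - greenFn d 𝔪 t x‖ ≤
            C * T ^ (2 * (1 - (d : ℝ) / 𝔪) - 1 / 𝔪) * ‖y‖) := by
  obtain ⟨k, hkk⟩ := heven
  have hm : 𝔪 = 2 * k := by omega
  subst hm
  have hk1 : 1 ≤ k := by omega
  obtain ⟨C, hC0, hCb⟩ := schwartz_translate_L1 (WS d k hk1)
  -- L¹ modulus at time 1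
  have hG1 : ∀ h : EuclideanSpace ℝ (Fin d),
      (∫ x : EuclideanSpace ℝ (Fin d),
        ‖greenFn d ((2*k : ℕ) : ℝ) 1 (x + h) - greenFn d ((2*k : ℕ) : ℝ) 1 x‖) ≤
      C * min 1 ‖h‖ := by
    intro h
    have hptw : ∀ x : EuclideanSpace ℝ (Fin d),
        ‖greenFn d ((2*k : ℕ) : ℝ) 1 (x + h) - greenFn d ((2*k : ℕ) : ℝ) 1 x‖ =
        (fun u : EuclideanSpace ℝ (Fin d) => ‖WS d k hk1 (u + (-h)) - WS d k hk1 u‖)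
          ((-1 : ℝ) • x) := by
      intro x
      simp only [green_one_eq d k hk1, neg_one_smul, neg_add]
    simp_rw [hptw]
    rw [MeasureTheory.Measure.integral_comp_smul (μ := volume)
      (f := fun u : EuclideanSpace ℝ (Fin d) => ‖WS d k hk1 (u + (-h)) - WS d k hk1 u‖) (-1)]
    rw [finrank_euclideanSpace_fin]
    have habs : |(((-1:ℝ))^d)⁻¹| = 1 := by
      rw [abs_inv, abs_pow, abs_neg, abs_one, one_pow, inv_one]
    rw [habs, one_smul]
    calc (∫ u : EuclideanSpace ℝ (Fin d), ‖WS d k hk1 (u + (-h)) - WS d k hk1 u‖)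
        ≤ C * min 1 ‖-h‖ := hCb (-h)
      _ = C * min 1 ‖h‖ := by rw [norm_neg]
  have h2k : 0 < 2 * k := by omega
  have part1 : ∀ t : ℝ, 0 < t → ∀ y : EuclideanSpace ℝ (Fin d),
      (∫ x : EuclideanSpace ℝ (Fin d),
        ‖greenFn d ((2*k : ℕ) : ℝ) t (x + y) - greenFn d ((2*k : ℕ) : ℝ) t x‖) ≤
      C * min 1 (t ^ (-(1 : ℝ) / (2*k : ℕ)) * ‖y‖) := by
    intro t ht y
    have hr : 0 < (t ^ (-(1:ℝ)/(2*k : ℕ)) : ℝ) := Real.rpow_pos_of_pos ht _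
    rw [green_L1_transfer d (2*k) h2k ht y]
    have := hG1 ((t ^ (-(1:ℝ)/(2*k : ℕ)) : ℝ) • y)
    rwa [norm_smul, Real.norm_eq_abs, abs_of_pos hr] at this
  refine ⟨C, hC0, part1, ?_⟩
  intro hdm T hT t ht htT y
  have hr : 0 < (t ^ (-(1:ℝ)/(2*k : ℕ)) : ℝ) := Real.rpow_pos_of_pos ht _
  have hγ : 0 < (t ^ (2 * (1 - (d:ℝ)/(2*k : ℕ))) : ℝ) := Real.rpow_pos_of_pos ht _
  have hI : (∫ x : EuclideanSpace ℝ (Fin d),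
      ‖greenFn d ((2*k : ℕ) : ℝ) t (x + y) - greenFn d ((2*k : ℕ) : ℝ) t x‖) ≤
      C * (t ^ (-(1 : ℝ) / (2*k : ℕ)) * ‖y‖) := by
    refine (part1 t ht y).trans ?_
    exact mul_le_mul_of_nonneg_left (min_le_right _ _) hC0.le
  have hmR : (0:ℝ) < ((2*k : ℕ) : ℝ) := by exact_mod_cast h2k
  have hd1 : (d:ℝ) + 1 ≤ ((2*k : ℕ) : ℝ) := by
    have : d < 2*k := by exact_mod_cast hdm
    exact_mod_cast this
  have hexp : (0:ℝ) ≤ 2 * (1 - (d:ℝ)/(2*k : ℕ)) - 1/(2*k : ℕ) := by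
    have heq : 2 * (1 - (d:ℝ)/(2*k : ℕ)) - 1/(2*k : ℕ) =
        (2 * ((2*k : ℕ) : ℝ) - 2*(d:ℝ) - 1) / ((2*k : ℕ) : ℝ) := by
      field_simp
    rw [heq]
    exact div_nonneg (by linarith) hmR.le
  calc t ^ (2 * (1 - (d:ℝ)/(2*k : ℕ))) *
        (∫ x : EuclideanSpace ℝ (Fin d),
          ‖greenFn d ((2*k : ℕ) : ℝ) t (x + y) - greenFn d ((2*k : ℕ) : ℝ) t x‖)
      ≤ t ^ (2 * (1 - (d:ℝ)/(2*k : ℕ))) * (C * (t ^ (-(1 : ℝ) / (2*k : ℕ)) * ‖y‖)) :=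
        mul_le_mul_of_nonneg_left hI hγ.le
    _ = C * (t ^ (2 * (1 - (d:ℝ)/(2*k : ℕ)) - 1/(2*k : ℕ))) * ‖y‖ := by
        rw [show (2 * (1 - (d:ℝ)/(2*k : ℕ)) - 1/(2*k : ℕ)) =
          2 * (1 - (d:ℝ)/(2*k : ℕ)) + (-(1:ℝ)/(2*k : ℕ)) by ring]
        rw [Real.rpow_add ht]
        ring
    _ ≤ C * (T ^ (2 * (1 - (d:ℝ)/(2*k : ℕ)) - 1/(2*k : ℕ))) * ‖y‖ := by
        refine mul_le_mul_of_nonneg_right ?_ (norm_nonneg _)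
        exact mul_le_mul_of_nonneg_left
          (Real.rpow_le_rpow ht.le htT.le hexp) hC0.le
end
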